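/- Let A be an n×n copositive matrix and let i, j ∈ {1,…,n}. Then A is irreducible with respect to E_{ij} if and only if there exists a minimal zero u of A such that (Au)_i = (Au)_j = 0 and u_i + u_j > 0. -/

import Mathlib

open Matrix

/-- A symmetric matrix `A` is copositive if `xᵀ A x ≥ 0` for all entrywise nonnegative `x`. -/
def Copositive {n : ℕ} (A : Matrix (Fin n) (Fin n) ℝ) : Prop :=
  A.IsSymm ∧ ∀ x : Fin n → ℝ, (∀ i, 0 ≤ x i) → 0 ≤ x ⬝ᵥ A.mulVec x

/-- The support of a vector. -/
def Supp {ι : Type*} (u : ι → ℝ) : Set ι := {i | u i ≠ 0}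

/-- A zero of a copositive matrix: a nonzero nonnegative vector `u` with `uᵀ A u = 0`. -/
def IsZeroOf {n : ℕ} (A : Matrix (Fin n) (Fin n) ℝ) (u : Fin n → ℝ) : Prop :=
  u ≠ 0 ∧ (∀ i, 0 ≤ u i) ∧ u ⬝ᵥ A.mulVec u = 0

/-- A minimal zero: a zero such that no zero has support strictly contained in its support. -/
def IsMinimalZeroOf {n : ℕ} (A : Matrix (Fin n) (Fin n) ℝ) (u : Fin n → ℝ) : Prop :=
  IsZeroOf A u ∧ ¬ ∃ v, IsZeroOf A v ∧ Supp v ⊂ Supp u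

/-- The principal submatrix of `A` with rows and columns in `I`. -/
def subMat {n : ℕ} (A : Matrix (Fin n) (Fin n) ℝ) (I : Finset (Fin n)) :
    Matrix {i // i ∈ I} {i // i ∈ I} ℝ :=
  A.submatrix Subtype.val Subtype.val

/-- The subvector of `u` with indices in `I`. -/
def subVec {n : ℕ} (u : Fin n → ℝ) (I : Finset (Fin n)) : {i // i ∈ I} → ℝ :=
  fun i => u i.val

/-- Irreducibility of a copositive matrix `A` with respect to a set `M` of matrices. -/
def IrreducibleWrtSet {n : ℕ} (A : Matrix (Fin n) (Fin n) ℝ)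
    (M : Set (Matrix (Fin n) (Fin n) ℝ)) : Prop :=
  ¬ ∃ γ : ℝ, 0 < γ ∧ ∃ B ∈ M, B ≠ 0 ∧ Copositive (A - γ • B)

/-- Irreducibility of a copositive matrix `A` with respect to a single matrix `M`. -/
def IrreducibleWrtMat {n : ℕ} (A M : Matrix (Fin n) (Fin n) ℝ) : Prop :=
  ¬ ∃ γ : ℝ, 0 < γ ∧ Copositive (A - γ • M)

/-- An extremal element of a cone `K` of vectors. -/
def IsExtremalIn {ι : Type*} (K : Set (ι → ℝ)) (u : ι → ℝ) : Prop :=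
  u ∈ K ∧ u ≠ 0 ∧ ∀ v w, v ∈ K → w ∈ K → u = v + w →
    (∃ a : ℝ, 0 ≤ a ∧ v = a • u) ∧ (∃ b : ℝ, 0 ≤ b ∧ w = b • u)

/-- The matrix with entries 1 at positions `(i,j)` and `(j,i)` and 0 elsewhere. -/
def Eij {n : ℕ} (i j : Fin n) : Matrix (Fin n) (Fin n) ℝ :=
  fun a b => if (a = i ∧ b = j) ∨ (a = j ∧ b = i) then 1 else 0

section helpers
variable {n : ℕ}

lemma dot_mulVec_symm (B : Matrix (Fin n) (Fin n) ℝ) (hB : B.IsSymm) (x y : Fin n → ℝ) :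
    x ⬝ᵥ B.mulVec y = y ⬝ᵥ B.mulVec x := by
  rw [dotProduct_mulVec, ← mulVec_transpose, hB.eq, dotProduct_comm]

lemma quad_expand (B : Matrix (Fin n) (Fin n) ℝ) (hB : B.IsSymm) (x d : Fin n → ℝ) :
    (x + d) ⬝ᵥ B.mulVec (x + d) =
      x ⬝ᵥ B.mulVec x + 2 * (d ⬝ᵥ B.mulVec x) + d ⬝ᵥ B.mulVec d := by
  rw [mulVec_add, dotProduct_add, add_dotProduct, add_dotProduct,
    dot_mulVec_symm B hB x d]
  ring

lemma aux_nonneg (a b ε : ℝ) (hε : 0 < ε) (h : ∀ t, 0 < t → t ≤ ε → 0 ≤ 2*t*a + t^2*b) :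
    0 ≤ a := by
  by_contra hneg
  push_neg at hneg
  rcases le_or_gt b 0 with hb | hb
  · have := h ε hε le_rfl
    nlinarith
  · have hab : 0 < -a/b := div_pos (by linarith) hb
    have ht : 0 < min ε (-a/b) := lt_min hε hab
    have h1 := h _ ht (min_le_left _ _)
    have h2 : min ε (-a/b) ≤ -a/b := min_le_right _ _
    have h3 : min ε (-a/b) * b ≤ -a := by
      rw [le_div_iff₀ hb] at h2; linarith
    nlinarith

lemma single_nonneg_pt (k : Fin n) (t : ℝ) (ht : 0 ≤ t) (l : Fin n) :
    0 ≤ (Pi.single k t : Fin n → ℝ) l := by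
  rcases eq_or_ne l k with h | h
  · subst h; simp [ht]
  · simp [Pi.single_apply, h]

lemma zero_mulVec_nonneg {A : Matrix (Fin n) (Fin n) ℝ} (hA : Copositive A)
    {u : Fin n → ℝ} (hu0 : ∀ k, 0 ≤ u k) (huz : u ⬝ᵥ A.mulVec u = 0) (k : Fin n) :
    0 ≤ A.mulVec u k := by
  apply aux_nonneg _ (A k k) 1 one_pos
  intro t ht _
  have hx : ∀ l, 0 ≤ (u + (Pi.single k t : Fin n → ℝ)) l := fun l =>
    add_nonneg (hu0 l) (single_nonneg_pt k t ht.le l)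
  have key := hA.2 _ hx
  rw [quad_expand A hA.1] at key
  simpa [huz, single_dotProduct, mulVec_single, dotProduct_single, mul_comm, mul_assoc,
    mul_left_comm, pow_two] using key

lemma zero_mulVec_supp {A : Matrix (Fin n) (Fin n) ℝ} (hA : Copositive A)
    {u : Fin n → ℝ} (hu0 : ∀ k, 0 ≤ u k) (huz : u ⬝ᵥ A.mulVec u = 0) {k : Fin n}
    (hk : u k ≠ 0) : A.mulVec u k = 0 := by
  have hpos : 0 < u k := lt_of_le_of_ne (hu0 k) (Ne.symm hk)
  have hle : 0 ≤ -(A.mulVec u k) := by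
    apply aux_nonneg _ (A k k) (u k) hpos
    intro t ht htle
    have hx : ∀ l, 0 ≤ (u + (Pi.single k (-t) : Fin n → ℝ)) l := by
      intro l
      rcases eq_or_ne l k with h | h
      · subst h; simp; linarith
      · simpa [Pi.single_apply, h] using hu0 l
    have key := hA.2 _ hx
    rw [quad_expand A hA.1] at key
    simp only [huz, single_dotProduct, mulVec_single, dotProduct_single, Pi.smul_apply,
      op_smul_eq_mul, Matrix.col_apply] at key
    nlinarith [key]
  linarith [zero_mulVec_nonneg hA hu0 huz k]

lemma Eij_symm (i j : Fin n) : (Eij i j).IsSymm := by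
  ext a b
  simp only [Eij, transpose_apply]
  exact if_congr (by tauto) rfl rfl

lemma Eij_mulVec (i j : Fin n) (x : Fin n → ℝ) (k : Fin n) :
    (Eij i j).mulVec x k = if k = i then x j else if k = j then x i else 0 := by
  classical
  simp only [Eij, mulVec, dotProduct, ite_mul, one_mul, zero_mul]
  by_cases hki : k = i
  · subst hki
    by_cases hkj : k = j
    · subst hkj
      simp [Finset.sum_ite_eq']
    · simp only [true_and, hkj, false_and, or_false, if_pos rfl]
      simp [Finset.sum_ite_eq']
  · by_cases hkj : k = j
    · subst hkj
      simp only [hki, false_and, false_or, true_and, if_neg hki, if_pos rfl]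
      simp [Finset.sum_ite_eq']
    · simp [hki, hkj]

lemma quadE (i j : Fin n) (x : Fin n → ℝ) :
    x ⬝ᵥ (Eij i j).mulVec x = (if i = j then 1 else 2) * (x i * x j) := by
  classical
  have : ∀ k, x k * (Eij i j).mulVec x k
      = x k * (if k = i then x j else if k = j then x i else 0) := by
    intro k; rw [Eij_mulVec]
  unfold dotProduct
  rw [Finset.sum_congr rfl fun k _ => this k]
  by_cases hij : i = j
  · subst hij
    rw [if_pos rfl]
    rw [Finset.sum_congr rfl (g := fun k => if k = i then x i * x i else 0)
      (fun k _ => by rcases eq_or_ne k i with h | h <;> simp [h])]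
    simp [Finset.sum_ite_eq']
  · rw [if_neg hij]
    rw [Finset.sum_congr rfl
      (g := fun k => (if k = i then x i * x j else 0) + (if k = j then x j * x i else 0))
      (fun k _ => by
        rcases eq_or_ne k i with h | h
        · subst h; simp [hij]
        · rcases eq_or_ne k j with h2 | h2
          · subst h2; simp [h]
          · simp [h, h2])]
    rw [Finset.sum_add_distrib]
    simp [Finset.sum_ite_eq']
    ring
lemma exists_minimal_zero {A : Matrix (Fin n) (Fin n) ℝ} (hA : Copositive A) (i j : Fin n) :
    ∀ (N : ℕ) (u : Fin n → ℝ), (Finset.univ.filter fun k => u k ≠ 0).card ≤ N →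
      IsZeroOf A u → A.mulVec u i = 0 → A.mulVec u j = 0 → 0 < u i + u j →
      ∃ v, IsMinimalZeroOf A v ∧ A.mulVec v i = 0 ∧ A.mulVec v j = 0 ∧ 0 < v i + v j := by
  intro N
  induction N with
  | zero =>
    intro u hcard hu hi hj hij
    exfalso
    obtain ⟨k, hk⟩ := Function.ne_iff.mp hu.1
    have : k ∈ Finset.univ.filter fun k => u k ≠ 0 := by
      simp [Finset.mem_filter]; exact hk
    have := Finset.card_pos.mpr ⟨k, this⟩
    omega
  | succ N ih =>
    intro u hcard hu hi hj hij
    by_cases hmin : ∃ v, IsZeroOf A v ∧ Supp v ⊂ Supp u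
    · obtain ⟨z, hz, hss⟩ := hmin
      have hzsub : ∀ k, z k ≠ 0 → u k ≠ 0 := fun k hk => hss.1 hk
      have hk0 : ∃ k0, u k0 ≠ 0 ∧ z k0 = 0 := by
        have h2 := hss.2
        rw [Set.not_subset] at h2
        obtain ⟨k0, hk0u, hk0z⟩ := h2
        exact ⟨k0, hk0u, by simpa [Supp] using hk0z⟩
      obtain ⟨k0, hk0u, hk0z⟩ := hk0
      set s : Finset (Fin n) := Finset.univ.filter fun k => z k ≠ 0 with hs
      have hne : s.Nonempty := by
        obtain ⟨k, hk⟩ := Function.ne_iff.mp hz.1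
        exact ⟨k, by simp [hs]; exact hk⟩
      have hzpos : ∀ k ∈ s, 0 < z k := by
        intro k hk
        simp only [hs, Finset.mem_filter] at hk
        exact lt_of_le_of_ne (hz.2.1 k) (Ne.symm hk.2)
      have hupos : ∀ k ∈ s, 0 < u k := by
        intro k hk
        simp only [hs, Finset.mem_filter] at hk
        exact lt_of_le_of_ne (hu.2.1 k) (Ne.symm (hzsub k hk.2))
      set t : ℝ := s.inf' hne fun k => u k / z k with htdef
      have ht : 0 < t := by
        rw [htdef, Finset.lt_inf'_iff]
        exact fun k hk => div_pos (hupos k hk) (hzpos k hk)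
      set w : Fin n → ℝ := u + (-t) • z with hwdef
      have hwk : ∀ k, w k = u k - t * z k := by
        intro k; simp [hwdef]; ring
      have hwnn : ∀ k, 0 ≤ w k := by
        intro k
        rcases eq_or_ne (z k) 0 with h | h
        · rw [hwk k, h]; simpa using hu.2.1 k
        · have hks : k ∈ s := by simp [hs]; exact h
          have h1 : t ≤ u k / z k := Finset.inf'_le _ hks
          have h2 : t * z k ≤ u k := (le_div_iff₀ (hzpos k hks)).mp h1
          rw [hwk k]; linarith
      have hAz_nn : ∀ k, 0 ≤ A.mulVec z k := zero_mulVec_nonneg hA hz.2.1 hz.2.2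
      have hAz_supp : ∀ k, z k ≠ 0 → A.mulVec z k = 0 :=
        fun k hk => zero_mulVec_supp hA hz.2.1 hz.2.2 hk
      have hD_nn : 0 ≤ u ⬝ᵥ A.mulVec z := by
        apply Finset.sum_nonneg
        intro k _
        rcases eq_or_ne (z k) 0 with h | h
        · exact mul_nonneg (hu.2.1 k) (hAz_nn k)
        · rw [hAz_supp k h, mul_zero]
      have hwq : w ⬝ᵥ A.mulVec w = -(2 * t) * (u ⬝ᵥ A.mulVec z) := by
        rw [hwdef, quad_expand A hA.1, hu.2.2]
        rw [smul_dotProduct, mulVec_smul, dotProduct_smul, smul_dotProduct]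
        rw [dot_mulVec_symm A hA.1 z u, hz.2.2]
        simp only [smul_eq_mul]; ring
      have hwnn0 : 0 ≤ w ⬝ᵥ A.mulVec w := hA.2 w hwnn
      have hD0 : u ⬝ᵥ A.mulVec z = 0 := by nlinarith [hwq, hwnn0, hD_nn, ht]
      have hwq0 : w ⬝ᵥ A.mulVec w = 0 := by rw [hwq, hD0]; ring
      have hwne : w ≠ 0 := by
        rw [Function.ne_iff]
        exact ⟨k0, by rw [hwk k0, hk0z]; simpa using hk0u⟩
      have hwzero : IsZeroOf A w := ⟨hwne, hwnn, hwq0⟩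
      have hAw : ∀ k, A.mulVec w k = A.mulVec u k - t * A.mulVec z k := by
        intro k
        rw [hwdef, mulVec_add, mulVec_smul]
        simp; ring
      have hAw_nn : ∀ k, 0 ≤ A.mulVec w k := zero_mulVec_nonneg hA hwnn hwq0
      have hAzi : A.mulVec z i = 0 := by
        have := hAw_nn i
        rw [hAw i, hi] at this
        nlinarith [hAz_nn i, ht]
      have hAzj : A.mulVec z j = 0 := by
        have := hAw_nn j
        rw [hAw j, hj] at this
        nlinarith [hAz_nn j, ht]
      have hAwi : A.mulVec w i = 0 := by rw [hAw i, hi, hAzi]; ring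
      have hAwj : A.mulVec w j = 0 := by rw [hAw j, hj, hAzj]; ring
      -- cardinalities
      have hsubz : (Finset.univ.filter fun k => z k ≠ 0) ⊆
          Finset.univ.filter fun k => u k ≠ 0 := by
        intro k hk
        simp only [Finset.mem_filter] at hk ⊢
        exact ⟨hk.1, hzsub k hk.2⟩
      have hcardz : (Finset.univ.filter fun k => z k ≠ 0).card ≤ N := by
        have hss' : (Finset.univ.filter fun k => z k ≠ 0) ⊂
            Finset.univ.filter fun k => u k ≠ 0 := by
          refine ⟨hsubz, fun hcon => ?_⟩
          have := hcon (by simp [Finset.mem_filter]; exact hk0u)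
          simp only [Finset.mem_filter] at this
          exact this.2 hk0z
        have := Finset.card_lt_card hss'
        omega
      have hcardw : (Finset.univ.filter fun k => w k ≠ 0).card ≤ N := by
        obtain ⟨l, hls, hl⟩ := Finset.exists_mem_eq_inf' hne fun k => u k / z k
        have hzl : z l ≠ 0 := by simpa [hs, Finset.mem_filter] using hls
        have hwl : w l = 0 := by
          rw [hwk l, htdef, hl]
          field_simp
          ring
        have hss' : (Finset.univ.filter fun k => w k ≠ 0) ⊂
            Finset.univ.filter fun k => u k ≠ 0 := by
          constructor
          · intro k hk
            simp only [Finset.mem_filter] at hk ⊢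
            refine ⟨hk.1, fun hcon => hk.2 ?_⟩
            have hzk : z k = 0 := by
              by_contra hzk
              exact (hzsub k hzk) hcon
            rw [hwk k, hcon, hzk]; ring
          · intro hcon
            have hul : u l ≠ 0 := hzsub l hzl
            have := hcon (by simp [Finset.mem_filter]; exact hul)
            simp only [Finset.mem_filter] at this
            exact this.2 hwl
        have := Finset.card_lt_card hss'
        omega
      have hsum : 0 < z i + z j ∨ 0 < w i + w j := by
        by_contra hcon
        push_neg at hcon
        have h1 : z i = 0 ∧ z j = 0 := by
          constructor <;> linarith [hz.2.1 i, hz.2.1 j, hcon.1]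
        have h2 : w i = 0 ∧ w j = 0 := by
          constructor <;> linarith [hwnn i, hwnn j, hcon.2]
        have hui : u i = w i + t * z i := by rw [hwk i]; ring
        have huj : u j = w j + t * z j := by rw [hwk j]; ring
        rw [hui, huj, h1.1, h1.2, h2.1, h2.2] at hij
        simp at hij
      rcases hsum with h | h
      · exact ih z hcardz hz hAzi hAzj h
      · exact ih w hcardw hwzero hAwi hAwj h
    · exact ⟨u, ⟨hu, hmin⟩, hi, hj, hij⟩
lemma sub_smul_quad (A E : Matrix (Fin n) (Fin n) ℝ) (γ : ℝ) (x y : Fin n → ℝ) :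
    x ⬝ᵥ (A - γ • E).mulVec y = x ⬝ᵥ A.mulVec y - γ * (x ⬝ᵥ E.mulVec y) := by
  rw [sub_mulVec, smul_mulVec, dotProduct_sub, dotProduct_smul, smul_eq_mul]

lemma sub_smul_mulVec (A E : Matrix (Fin n) (Fin n) ℝ) (γ : ℝ) (x : Fin n → ℝ) (k : Fin n) :
    (A - γ • E).mulVec x k = A.mulVec x k - γ * E.mulVec x k := by
  rw [sub_mulVec, smul_mulVec]
  simp

lemma sub_smul_isSymm {A E : Matrix (Fin n) (Fin n) ℝ} (hA : A.IsSymm) (hE : E.IsSymm)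
    (γ : ℝ) : (A - γ • E).IsSymm := by
  unfold Matrix.IsSymm at *
  rw [transpose_sub, transpose_smul, hA, hE]

lemma quadForm_continuous (B : Matrix (Fin n) (Fin n) ℝ) :
    Continuous fun x : Fin n → ℝ => x ⬝ᵥ B.mulVec x := by
  simp only [dotProduct, mulVec]
  exact continuous_finset_sum _ fun k _ =>
    (continuous_apply k).mul (continuous_finset_sum _ fun l _ =>
      continuous_const.mul (continuous_apply l))

lemma mulVec_coord_continuous (B : Matrix (Fin n) (Fin n) ℝ) (k : Fin n) :
    Continuous fun x : Fin n → ℝ => B.mulVec x k := by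
  simp only [mulVec, dotProduct]
  exact continuous_finset_sum _ fun l _ => continuous_const.mul (continuous_apply l)

lemma single_sum_one (i : Fin n) : ∑ k, (Pi.single i (1:ℝ) : Fin n → ℝ) k = 1 := by
  simp [Finset.sum_pi_single]

lemma simplex_compact (F : Finset (Fin n)) :
    IsCompact {x : Fin n → ℝ | (∀ k, 0 ≤ x k) ∧ (∀ k, k ∉ F → x k = 0) ∧ ∑ k, x k = 1} := by
  have hset : {x : Fin n → ℝ | (∀ k, 0 ≤ x k) ∧ (∀ k, k ∉ F → x k = 0) ∧ ∑ k, x k = 1}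
      = (⋂ k, {x : Fin n → ℝ | 0 ≤ x k}) ∩
        ((⋂ k, ⋂ _ : k ∉ F, {x : Fin n → ℝ | x k = 0}) ∩
          {x : Fin n → ℝ | ∑ k, x k = 1}) := by
    ext x
    simp [Set.mem_iInter, Set.mem_setOf_eq]
  apply IsCompact.of_isClosed_subset
    (isCompact_univ_pi fun _ : Fin n => isCompact_Icc (a := (0:ℝ)) (b := 1))
  · rw [hset]
    apply IsClosed.inter
    · exact isClosed_iInter fun k => isClosed_le continuous_const (continuous_apply k)
    · apply IsClosed.inter
      · exact isClosed_iInter fun k => isClosed_iInter fun _ =>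
          isClosed_eq (continuous_apply k) continuous_const
      · exact isClosed_eq (continuous_finset_sum _ fun k _ => continuous_apply k)
          continuous_const
  · intro x hx
    rw [Set.mem_univ_pi]
    intro k
    refine ⟨hx.1 k, ?_⟩
    calc x k ≤ ∑ l, x l := Finset.single_le_sum (fun l _ => hx.1 l) (Finset.mem_univ k)
    _ = 1 := hx.2.2
lemma min_point {A : Matrix (Fin n) (Fin n) ℝ} (hA : Copositive A) (i j : Fin n)
    (F : Finset (Fin n)) (hiF : i ∈ F) (hjF : j ∈ F) (γ : ℝ) (hγ : 0 < γ)
    (hwit : ∃ x : Fin n → ℝ, (∀ k, 0 ≤ x k) ∧ (∀ k, k ∉ F → x k = 0) ∧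
      x ⬝ᵥ (A - γ • Eij i j).mulVec x < 0) :
    ∃ x : Fin n → ℝ, (∀ k, 0 ≤ x k) ∧ (∀ k, k ∉ F → x k = 0) ∧ (∑ k, x k = 1) ∧
      x ⬝ᵥ (A - γ • Eij i j).mulVec x < 0 ∧
      A.mulVec x i ≤ γ ∧ A.mulVec x j ≤ γ ∧ x ⬝ᵥ A.mulVec x ≤ 2 * γ := by
  classical
  set E : Matrix (Fin n) (Fin n) ℝ := Eij i j with hE
  set B : Matrix (Fin n) (Fin n) ℝ := A - γ • E with hB
  have hBs : B.IsSymm := sub_smul_isSymm hA.1 (Eij_symm i j) γ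
  set Δ : Set (Fin n → ℝ) :=
    {x | (∀ k, 0 ≤ x k) ∧ (∀ k, k ∉ F → x k = 0) ∧ ∑ k, x k = 1} with hΔdef
  have hcomp : IsCompact Δ := simplex_compact F
  have hne : Δ.Nonempty := by
    refine ⟨Pi.single i 1, fun k => single_nonneg_pt i 1 zero_le_one k, fun k hk => ?_, single_sum_one i⟩
    exact Pi.single_eq_of_ne (by rintro rfl; exact hk hiF) 1
  obtain ⟨x, hxΔ, hxmin⟩ := hcomp.exists_isMinOn hne (quadForm_continuous B).continuousOn
  obtain ⟨hxnn, hxsupp, hxsum⟩ := hxΔ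
  -- the minimum is negative
  obtain ⟨x', h1', h2', h3'⟩ := hwit
  have hx'ne : x' ≠ 0 := by
    intro h; rw [h] at h3'; simp [zero_dotProduct] at h3'
  have hspos : 0 < ∑ k, x' k := by
    rcases (Finset.sum_nonneg fun k _ => h1' k).lt_or_eq with h | h
    · exact h
    · exfalso
      apply hx'ne
      funext k
      exact (Finset.sum_eq_zero_iff_of_nonneg fun k _ => h1' k).mp h.symm k (Finset.mem_univ k)
  set s : ℝ := ∑ k, x' k
  have hx''Δ : (s⁻¹ • x') ∈ Δ := by
    refine ⟨fun k => mul_nonneg (inv_nonneg.mpr hspos.le) (h1' k), fun k hk => ?_, ?_⟩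
    · simp [h2' k hk]
    · simp only [Pi.smul_apply, smul_eq_mul, ← Finset.mul_sum]
      exact inv_mul_cancel₀ hspos.ne'
  have hμneg : x ⬝ᵥ B.mulVec x < 0 := by
    refine lt_of_le_of_lt (hxmin hx''Δ) ?_
    show (s⁻¹ • x') ⬝ᵥ B.mulVec (s⁻¹ • x') < 0
    rw [smul_dotProduct, mulVec_smul, dotProduct_smul, smul_eq_mul, smul_eq_mul]
    have hin : 0 < s⁻¹ := inv_pos.mpr hspos
    nlinarith [h3', mul_neg_of_pos_of_neg (mul_pos hin hin) h3']
  -- positivity of coordinates i and j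
  have hφnn : 0 ≤ x ⬝ᵥ A.mulVec x := hA.2 x hxnn
  have hfsplit : x ⬝ᵥ B.mulVec x = x ⬝ᵥ A.mulVec x - γ * (x ⬝ᵥ E.mulVec x) :=
    sub_smul_quad A E γ x x
  have hψpos : 0 < x ⬝ᵥ E.mulVec x := by
    by_contra hcon
    push_neg at hcon
    nlinarith
  have hxij : 0 < x i * x j := by
    rw [hE, quadE] at hψpos
    split_ifs at hψpos <;> nlinarith
  have hxi : 0 < x i := by nlinarith [hxnn i, hxnn j]
  have hxj : 0 < x j := by nlinarith [hxnn i, hxnn j]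
  have hxle1 : ∀ k, x k ≤ 1 := by
    intro k
    calc x k ≤ ∑ l, x l := Finset.single_le_sum (fun l _ => hxnn l) (Finset.mem_univ k)
    _ = 1 := hxsum
  -- KKT
  have hkkt : ∀ k, 0 < x k → ∀ l ∈ F, B.mulVec x k ≤ B.mulVec x l := by
    intro k hk l hlF
    rcases eq_or_ne l k with rfl | hlk
    · exact le_rfl
    have hkF : k ∈ F := by
      by_contra hkF
      rw [hxsupp k hkF] at hk; exact lt_irrefl 0 hk
    set dd : Fin n → ℝ := (Pi.single l 1 : Fin n → ℝ) - Pi.single k 1 with hdd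
    have key : 0 ≤ B.mulVec x l - B.mulVec x k := by
      apply aux_nonneg _ (dd ⬝ᵥ B.mulVec dd) (x k) hk
      intro t ht htle
      have hyΔ : (x + t • dd) ∈ Δ := by
        refine ⟨?_, ?_, ?_⟩
        · intro r
          simp only [Pi.add_apply, Pi.smul_apply, hdd, Pi.sub_apply, smul_eq_mul]
          rcases eq_or_ne r l with rfl | hrl
          · rw [Pi.single_eq_same, Pi.single_eq_of_ne hlk]
            have := hxnn r; nlinarith
          · rcases eq_or_ne r k with rfl | hrk
            · rw [Pi.single_eq_same, Pi.single_eq_of_ne (Ne.symm hlk)]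
              have := hxnn r; nlinarith [htle]
            · rw [Pi.single_eq_of_ne hrl, Pi.single_eq_of_ne hrk]
              have := hxnn r; nlinarith
        · intro r hr
          have hrl : r ≠ l := fun h => hr (h ▸ hlF)
          have hrk : r ≠ k := fun h => hr (h ▸ hkF)
          simp only [Pi.add_apply, Pi.smul_apply, hdd, Pi.sub_apply, smul_eq_mul,
            Pi.single_eq_of_ne hrl, Pi.single_eq_of_ne hrk, hxsupp r hr]
          ring
        · rw [Finset.sum_congr rfl
            (g := fun r => x r + t * ((Pi.single l (1:ℝ) : Fin n → ℝ) r
              - (Pi.single k (1:ℝ) : Fin n → ℝ) r))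
            (fun r _ => by simp [hdd, smul_eq_mul])]
          rw [Finset.sum_add_distrib, hxsum, ← Finset.mul_sum, Finset.sum_sub_distrib,
            single_sum_one, single_sum_one]
          ring
      have hmin : x ⬝ᵥ B.mulVec x ≤ (x + t • dd) ⬝ᵥ B.mulVec (x + t • dd) := hxmin hyΔ
      rw [quad_expand B hBs x (t • dd)] at hmin
      have hd1 : (t • dd) ⬝ᵥ B.mulVec x = t * (B.mulVec x l - B.mulVec x k) := by
        rw [smul_dotProduct, hdd, sub_dotProduct, single_dotProduct, single_dotProduct]
        simp [smul_eq_mul]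
      have hd2 : (t • dd) ⬝ᵥ B.mulVec (t • dd) = t ^ 2 * (dd ⬝ᵥ B.mulVec dd) := by
        rw [smul_dotProduct, mulVec_smul, dotProduct_smul]
        simp [smul_eq_mul]; ring
      rw [hd1, hd2] at hmin
      nlinarith [hmin]
    linarith
  -- B.mulVec x i ≤ min value
  have hmu : ∀ k0, 0 < x k0 → B.mulVec x k0 ≤ x ⬝ᵥ B.mulVec x := by
    intro k0 hk0
    have h1 : ∀ k, x k * B.mulVec x k0 ≤ x k * B.mulVec x k := by
      intro k
      rcases (hxnn k).lt_or_eq with h | h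
      · have hkF : k ∈ F := by
          by_contra hkF
          rw [hxsupp k hkF] at h; exact lt_irrefl 0 h
        exact mul_le_mul_of_nonneg_left (hkkt k0 hk0 k hkF) (hxnn k)
      · rw [← h]; ring_nf; exact le_rfl
    calc B.mulVec x k0 = (∑ k, x k) * B.mulVec x k0 := by rw [hxsum]; ring
    _ = ∑ k, x k * B.mulVec x k0 := by rw [Finset.sum_mul]
    _ ≤ ∑ k, x k * B.mulVec x k := Finset.sum_le_sum fun k _ => h1 k
    _ = x ⬝ᵥ B.mulVec x := rfl
  have hEx : ∀ k0, E.mulVec x k0 ≤ 1 := by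
    intro k0
    rw [hE, Eij_mulVec]
    split_ifs
    · exact hxle1 j
    · exact hxle1 i
    · linarith
  have hAxi : A.mulVec x i ≤ γ := by
    have h1 := hmu i hxi
    have h2 := sub_smul_mulVec A E γ x i
    rw [← hB] at h2
    have h3 := hEx i
    nlinarith [hμneg]
  have hAxj : A.mulVec x j ≤ γ := by
    have h1 := hmu j hxj
    have h2 := sub_smul_mulVec A E γ x j
    rw [← hB] at h2
    have h3 := hEx j
    nlinarith [hμneg]
  have hφle : x ⬝ᵥ A.mulVec x ≤ 2 * γ := by
    have hq := quadE i j x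
    rw [← hE] at hq
    have hψle : x ⬝ᵥ E.mulVec x ≤ 2 := by
      rw [hq]
      have h1 := hxle1 i
      have h2 := hxle1 j
      split_ifs <;> nlinarith [hxnn i, hxnn j]
    nlinarith [hμneg]
  exact ⟨x, hxnn, hxsupp, hxsum, hμneg, hAxi, hAxj, hφle⟩
lemma hard_aux {A : Matrix (Fin n) (Fin n) ℝ} (hA : Copositive A) (i j : Fin n) :
    ∀ (N : ℕ) (F : Finset (Fin n)), F.card ≤ N → i ∈ F → j ∈ F →
      (∀ γ : ℝ, 0 < γ → ∃ x : Fin n → ℝ, (∀ k, 0 ≤ x k) ∧ (∀ k, k ∉ F → x k = 0) ∧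
        x ⬝ᵥ (A - γ • Eij i j).mulVec x < 0) →
      ∃ u, IsZeroOf A u ∧ A.mulVec u i = 0 ∧ A.mulVec u j = 0 ∧ 0 < u i + u j := by
  intro N
  induction N with
  | zero =>
    intro F hF hiF _ _
    have := Finset.card_pos.mpr ⟨i, hiF⟩
    omega
  | succ N ih =>
    intro F hF hiF hjF hwit
    classical
    set γ : ℕ → ℝ := fun m => 1 / ((m : ℝ) + 1) with hγdef
    have hγpos : ∀ m : ℕ, 0 < γ m := fun m => by positivity
    have hγto : Filter.Tendsto γ Filter.atTop (nhds 0) :=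
      tendsto_one_div_add_atTop_nhds_zero_nat
    have hmp : ∀ m : ℕ, ∃ x : Fin n → ℝ, (∀ k, 0 ≤ x k) ∧ (∀ k, k ∉ F → x k = 0) ∧
        (∑ k, x k = 1) ∧ x ⬝ᵥ (A - γ m • Eij i j).mulVec x < 0 ∧
        A.mulVec x i ≤ γ m ∧ A.mulVec x j ≤ γ m ∧ x ⬝ᵥ A.mulVec x ≤ 2 * γ m :=
      fun m => min_point hA i j F hiF hjF (γ m) (hγpos m) (hwit (γ m) (hγpos m))
    choose xs h1 h2 h3 h4 h5 h6 h7 using hmp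
    have hxsΔ : ∀ m, xs m ∈ {x : Fin n → ℝ | (∀ k, 0 ≤ x k) ∧ (∀ k, k ∉ F → x k = 0) ∧
        ∑ k, x k = 1} := fun m => ⟨h1 m, h2 m, h3 m⟩
    obtain ⟨u, huΔ, σ, hσmono, hσtend⟩ := (simplex_compact F).tendsto_subseq hxsΔ
    obtain ⟨hunn, husupp, husum⟩ := huΔ
    have hγσ : Filter.Tendsto (fun m => γ (σ m)) Filter.atTop (nhds 0) :=
      hγto.comp hσmono.tendsto_atTop
    have hune : u ≠ 0 := by
      intro h
      rw [h] at husum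
      simp at husum
    have hq : Filter.Tendsto (fun m => (xs (σ m)) ⬝ᵥ A.mulVec (xs (σ m))) Filter.atTop
        (nhds (u ⬝ᵥ A.mulVec u)) := ((quadForm_continuous A).tendsto u).comp hσtend
    have huq_le : u ⬝ᵥ A.mulVec u ≤ 0 := by
      have h2γ : Filter.Tendsto (fun m => 2 * γ (σ m)) Filter.atTop (nhds 0) := by
        simpa using hγσ.const_mul 2
      exact le_of_tendsto_of_tendsto' hq h2γ (fun m => h7 (σ m))
    have huq : u ⬝ᵥ A.mulVec u = 0 := le_antisymm huq_le (hA.2 u hunn)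
    have huzero : IsZeroOf A u := ⟨hune, hunn, huq⟩
    have hAui : A.mulVec u i = 0 := by
      have hti : Filter.Tendsto (fun m => A.mulVec (xs (σ m)) i) Filter.atTop
          (nhds (A.mulVec u i)) := ((mulVec_coord_continuous A i).tendsto u).comp hσtend
      have hle : A.mulVec u i ≤ 0 := le_of_tendsto_of_tendsto' hti hγσ (fun m => h5 (σ m))
      exact le_antisymm hle (zero_mulVec_nonneg hA hunn huq i)
    have hAuj : A.mulVec u j = 0 := by
      have htj : Filter.Tendsto (fun m => A.mulVec (xs (σ m)) j) Filter.atTop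
          (nhds (A.mulVec u j)) := ((mulVec_coord_continuous A j).tendsto u).comp hσtend
      have hle : A.mulVec u j ≤ 0 := le_of_tendsto_of_tendsto' htj hγσ (fun m => h6 (σ m))
      exact le_antisymm hle (zero_mulVec_nonneg hA hunn huq j)
    by_cases hpos : 0 < u i + u j
    · exact ⟨u, huzero, hAui, hAuj, hpos⟩
    push_neg at hpos
    have hui : u i = 0 := le_antisymm (by linarith [hunn j]) (hunn i)
    have huj : u j = 0 := le_antisymm (by linarith [hunn i]) (hunn j)
    have hAu_nn : ∀ k, 0 ≤ A.mulVec u k := zero_mulVec_nonneg hA hunn huq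
    have hEu : (Eij i j).mulVec u = 0 := by
      funext k
      rw [Eij_mulVec]
      split_ifs <;> simp [hui, huj]
    set su : Finset (Fin n) := Finset.univ.filter fun k => u k ≠ 0 with hsu
    have hsune : su.Nonempty := by
      obtain ⟨k, hk⟩ := Function.ne_iff.mp hune
      exact ⟨k, by simp [hsu]; exact hk⟩
    have hupos : ∀ k ∈ su, 0 < u k := fun k hk =>
      lt_of_le_of_ne (hunn k) (Ne.symm (by simpa [hsu] using hk))
    set ts : ℕ → ℝ := fun m => su.inf' hsune fun k => xs m k / u k with hts
    have htsnn : ∀ m, 0 ≤ ts m := fun m =>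
      Finset.le_inf' _ _ fun k hk => div_nonneg (h1 m k) (hupos k hk).le
    set ys : ℕ → Fin n → ℝ := fun m => xs m + (-(ts m)) • u with hys
    have hysk : ∀ m k, ys m k = xs m k - ts m * u k := by
      intro m k; simp [hys]; ring
    have hxs_eq : ∀ m, xs m = ys m + ts m • u := by
      intro m; funext k
      simp only [Pi.add_apply, Pi.smul_apply, smul_eq_mul, hysk m k]
      ring
    have hysnn : ∀ m k, 0 ≤ ys m k := by
      intro m k
      rcases eq_or_ne (u k) 0 with h | h
      · rw [hysk m k, h]; simpa using h1 m k
      · have hks : k ∈ su := by simp [hsu]; exact h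
        have hle : ts m ≤ xs m k / u k := Finset.inf'_le _ hks
        have := (le_div_iff₀ (hupos k hks)).mp hle
        rw [hysk m k]; linarith
    have hlm : ∀ m, ∃ l ∈ su, ys m l = 0 := by
      intro m
      obtain ⟨l, hls, hl⟩ := Finset.exists_mem_eq_inf' hsune fun k => xs m k / u k
      refine ⟨l, hls, ?_⟩
      have hulne : u l ≠ 0 := by simpa [hsu] using hls
      have htl : ts m = xs m l / u l := hl
      rw [hysk m l, htl]
      field_simp
      ring
    choose lm hlmsu hlmz using hlm
    obtain ⟨l, hlfib⟩ := Finite.exists_infinite_fiber lm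
    have hlinf : (lm ⁻¹' {l}).Infinite := Set.infinite_coe_iff.mp hlfib
    have hlsu : l ∈ su := by
      obtain ⟨m, hm⟩ := hlinf.nonempty
      have : lm m = l := hm
      exact this ▸ hlmsu m
    have hul : u l ≠ 0 := by simpa [hsu] using hlsu
    have hlF : l ∈ F := by
      by_contra h
      exact hul (husupp l h)
    have hli : i ≠ l := fun h => hul (h ▸ hui)
    have hlj : j ≠ l := fun h => hul (h ▸ huj)
    apply ih (F.erase l) ?_ (Finset.mem_erase.mpr ⟨hli, hiF⟩) (Finset.mem_erase.mpr ⟨hlj, hjF⟩)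
    · -- witness property for F.erase l
      intro γ' hγ'
      obtain ⟨M, hM⟩ := exists_nat_gt (1 / γ')
      obtain ⟨m, hmfib, hmM⟩ := hlinf.exists_gt M
      have hlmm : lm m = l := hmfib
      have hγm : γ m ≤ γ' := by
        rw [hγdef]
        have hm1 : (1:ℝ)/γ' < (m:ℝ) + 1 := by
          have : (M:ℝ) < (m:ℝ) := by exact_mod_cast hmM
          linarith
        rw [div_le_iff₀ (by positivity)]
        rw [div_lt_iff₀ hγ'] at hm1
        linarith
      refine ⟨ys m, hysnn m, ?_, ?_⟩
      · intro k hk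
        rcases eq_or_ne k l with rfl | hkl
        · rw [← hlmm]; exact hlmz m
        · have hkF : k ∉ F := fun hcon => hk (Finset.mem_erase.mpr ⟨hkl, hcon⟩)
          rw [hysk m k, h2 m k hkF, husupp k hkF]
          ring
      · -- value negative
        have step2 : xs m ⬝ᵥ (A - γ' • Eij i j).mulVec (xs m) ≤
            xs m ⬝ᵥ (A - γ m • Eij i j).mulVec (xs m) := by
          rw [sub_smul_quad, sub_smul_quad]
          have hψnn : 0 ≤ xs m ⬝ᵥ (Eij i j).mulVec (xs m) := by
            rw [quadE]
            have := h1 m i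
            have := h1 m j
            split_ifs <;> nlinarith
          nlinarith
        have step1 : ys m ⬝ᵥ (A - γ' • Eij i j).mulVec (ys m) ≤
            xs m ⬝ᵥ (A - γ' • Eij i j).mulVec (xs m) := by
          have hBs' : (A - γ' • Eij i j).IsSymm := sub_smul_isSymm hA.1 (Eij_symm i j) γ'
          rw [hxs_eq m, quad_expand _ hBs' (ys m) (ts m • u)]
          have hc1 : (ts m • u) ⬝ᵥ (A - γ' • Eij i j).mulVec (ys m) =
              ts m * (u ⬝ᵥ A.mulVec (ys m)) := by
            rw [smul_dotProduct, sub_smul_quad]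
            rw [dot_mulVec_symm (Eij i j) (Eij_symm i j) u (ys m), hEu]
            simp [smul_eq_mul]
          have hc2 : (ts m • u) ⬝ᵥ (A - γ' • Eij i j).mulVec (ts m • u) =
              ts m * ts m * (u ⬝ᵥ A.mulVec u) := by
            rw [smul_dotProduct, mulVec_smul, dotProduct_smul, sub_smul_quad]
            rw [dot_mulVec_symm (Eij i j) (Eij_symm i j) u u, hEu]
            simp [smul_eq_mul]; ring
          have hc3 : 0 ≤ u ⬝ᵥ A.mulVec (ys m) := by
            rw [dot_mulVec_symm A hA.1 u (ys m)]
            exact Finset.sum_nonneg fun k _ => mul_nonneg (hysnn m k) (hAu_nn k)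
          rw [hc1, hc2, huq]
          nlinarith [htsnn m]
        calc ys m ⬝ᵥ (A - γ' • Eij i j).mulVec (ys m)
            ≤ xs m ⬝ᵥ (A - γ' • Eij i j).mulVec (xs m) := step1
          _ ≤ xs m ⬝ᵥ (A - γ m • Eij i j).mulVec (xs m) := step2
          _ < 0 := h4 m
    · -- cardinality
      rw [Finset.card_erase_of_mem hlF]
      omega

end helpers

theorem stmt13 {n : ℕ} (A : Matrix (Fin n) (Fin n) ℝ) (hA : Copositive A)
    (i j : Fin n) :
    IrreducibleWrtMat A (Eij i j) ↔
      ∃ u, IsMinimalZeroOf A u ∧ A.mulVec u i = 0 ∧ A.mulVec u j = 0 ∧ 0 < u i + u j := by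
  classical
  constructor
  · intro hirr
    have hwit : ∀ γ : ℝ, 0 < γ → ∃ x : Fin n → ℝ, (∀ k, 0 ≤ x k) ∧
        (∀ k, k ∉ (Finset.univ : Finset (Fin n)) → x k = 0) ∧
        x ⬝ᵥ (A - γ • Eij i j).mulVec x < 0 := by
      intro γ hγ
      have hsym : (A - γ • Eij i j).IsSymm := sub_smul_isSymm hA.1 (Eij_symm i j) γ
      have hnc : ¬ Copositive (A - γ • Eij i j) := fun hc => hirr ⟨γ, hγ, hc⟩
      have hnc' : ¬ ∀ x : Fin n → ℝ, (∀ k, 0 ≤ x k) → 0 ≤ x ⬝ᵥ (A - γ • Eij i j).mulVec x :=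
        fun h => hnc ⟨hsym, h⟩
      push_neg at hnc'
      obtain ⟨x, hx1, hx2⟩ := hnc'
      exact ⟨x, hx1, fun k hk => absurd (Finset.mem_univ k) hk, hx2⟩
    obtain ⟨u, huz, hui, huj, hus⟩ := hard_aux hA i j n Finset.univ
      (by simp) (Finset.mem_univ i) (Finset.mem_univ j) hwit
    exact exists_minimal_zero hA i j _ u le_rfl huz hui huj hus
  · rintro ⟨u, humin, hi, hj, hpos⟩ ⟨γ, hγ, hcop⟩
    obtain ⟨hune, hunn, huq⟩ := humin.1
    set dd : Fin n → ℝ := fun k => (if k = i then (1:ℝ) else 0) + (if k = j then 1 else 0)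
      with hdd
    have hddot : ∀ w : Fin n → ℝ, dd ⬝ᵥ w = w i + w j := by
      intro w
      simp only [hdd, dotProduct, add_mul, ite_mul, one_mul, zero_mul]
      rw [Finset.sum_add_distrib]
      congr 1 <;> simp [Finset.sum_ite_eq']
    have hddnn : ∀ k, 0 ≤ dd k := by
      intro k
      simp only [hdd]
      split_ifs <;> norm_num
    have hddi : 1 ≤ dd i := by
      simp only [hdd, if_pos rfl]
      split_ifs <;> norm_num
    have hddj : 1 ≤ dd j := by
      simp only [hdd]
      split_ifs <;> simp_all
    set q : ℝ := dd ⬝ᵥ A.mulVec dd with hq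
    have key : ∀ t : ℝ, 0 < t → t ≤ 1 → 0 ≤ 2 * t * (-(γ * (u i + u j)) / 2) + t ^ 2 * q := by
      intro t ht _
      set v : Fin n → ℝ := u + t • dd with hv
      have hvnn : ∀ k, 0 ≤ v k := fun k =>
        add_nonneg (hunn k) (mul_nonneg ht.le (hddnn k))
      have h0 := hcop.2 v hvnn
      rw [sub_smul_quad] at h0
      have hquad : v ⬝ᵥ A.mulVec v = t ^ 2 * q := by
        have h1 : dd ⬝ᵥ A.mulVec u = 0 := by rw [hddot, hi, hj]; ring
        rw [hv, quad_expand A hA.1 u (t • dd), huq]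
        simp only [smul_dotProduct, dotProduct_smul, mulVec_smul, smul_eq_mul, h1]
        rw [← hq]
        ring
      have hψ : t * (u i + u j) ≤ v ⬝ᵥ (Eij i j).mulVec v := by
        rw [quadE]
        have hvi : u i + t ≤ v i := by
          simp only [hv, Pi.add_apply, Pi.smul_apply, smul_eq_mul]
          nlinarith [hddi]
        have hvj : u j + t ≤ v j := by
          simp only [hv, Pi.add_apply, Pi.smul_apply, smul_eq_mul]
          nlinarith [hddj]
        have hvinn := hvnn i
        have hvjnn := hvnn j
        have h2 : (u i + t) * (u j + t) ≤ v i * v j := by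
          apply mul_le_mul hvi hvj (by linarith [hunn j]) (by linarith [hunn i, ht])
        split_ifs <;> nlinarith [hunn i, hunn j, ht]
      rw [hquad] at h0
      nlinarith [h0, hψ]
    have habs := aux_nonneg _ q 1 one_pos key
    nlinarith [habs, hpos, hγ, mul_pos hγ hpos]
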